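/- The limit of M_k = √π · 2^(k−1) · Γ(k/2 + 1)^2 / Γ(k + 3/2) as k → ∞ equals π / (2√2). -/

import Mathlib

open Real

open Filter in
private lemma tendsto_even_odd' {f : ℕ → ℝ} {l : ℝ}
    (he : Tendsto (fun m => f (2*m)) atTop (nhds l))
    (ho : Tendsto (fun m => f (2*m+1)) atTop (nhds l)) :
    Tendsto f atTop (nhds l) := by
  rw [Metric.tendsto_atTop] at he ho ⊢
  intro ε hε
  obtain ⟨N1, h1⟩ := he ε hε
  obtain ⟨N2, h2⟩ := ho ε hε
  refine ⟨2*(N1+N2)+2, fun n hn => ?_⟩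
  rcases Nat.even_or_odd n with ⟨m, hm⟩ | ⟨m, hm⟩
  · have hm' : n = 2*m := by omega
    rw [hm']; exact h1 m (by omega)
  · rw [hm]; exact h2 m (by omega)

private noncomputable def Pseq (n : ℕ) : ℝ :=
  Gamma ((n : ℝ) + 1) / (Gamma ((n : ℝ) + 1/2) * Real.sqrt n)

private lemma gammaHalf (n : ℕ) :
    Gamma ((n : ℝ) + 1/2) = (Nat.factorial (2*n)) * Real.sqrt π / (4^n * Nat.factorial n) := by
  induction n with
  | zero => norm_num [Real.Gamma_one_half_eq]
  | succ n ih =>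
    have hne : ((n : ℝ) + 1/2) ≠ 0 := by positivity
    rw [show ((n+1 : ℕ) : ℝ) + 1/2 = ((n:ℝ) + 1/2) + 1 by push_cast; ring,
      Real.Gamma_add_one hne, ih, show 2*(n+1) = (2*n+1)+1 by ring,
      Nat.factorial_succ, Nat.factorial_succ, Nat.factorial_succ]
    have h4 : (0:ℝ) < 4 ^ n := by positivity
    have hf : (0:ℝ) < (Nat.factorial n : ℝ) := by exact_mod_cast Nat.factorial_pos n
    push_cast
    field_simp
    ring

private lemma P_eq_stirling {n : ℕ} (hn : 1 ≤ n) :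
    Pseq n = Stirling.stirlingSeq n ^ 2 / (Stirling.stirlingSeq (2*n) * Real.sqrt π) := by
  have hn0 : (0:ℝ) < n := by exact_mod_cast hn
  have hE : (0:ℝ) < ((n:ℝ) / Real.exp 1) ^ n := by positivity
  have hA : (0:ℝ) < (Nat.factorial n : ℝ) := by exact_mod_cast Nat.factorial_pos n
  have hB : (0:ℝ) < (Nat.factorial (2*n) : ℝ) := by exact_mod_cast Nat.factorial_pos (2*n)
  have hsn : Real.sqrt (n:ℝ) * Real.sqrt (n:ℝ) = (n:ℝ) := Real.mul_self_sqrt hn0.le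
  have hs2n : Real.sqrt (2*(n:ℝ)) * Real.sqrt (2*(n:ℝ)) = 2*(n:ℝ) :=
    Real.mul_self_sqrt (by positivity)
  have hsqpi : (0:ℝ) < Real.sqrt π := Real.sqrt_pos.mpr pi_pos
  have hcast : ((2*n : ℕ) : ℝ) = 2 * (n:ℝ) := by push_cast; ring
  have hF : ((2*(n:ℝ)) / Real.exp 1) ^ (2*n) = 4^n * (((n:ℝ)/Real.exp 1)^n)^2 := by
    rw [show (2*(n:ℝ))/Real.exp 1 = 2 * ((n:ℝ)/Real.exp 1) by ring, mul_pow,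
      show (2:ℝ)^(2*n) = 4^n by rw [pow_mul]; norm_num,
      show (((n:ℝ)/Real.exp 1))^(2*n) = (((n:ℝ)/Real.exp 1)^n)^2 by
        rw [← pow_mul, mul_comm]]
  have hs4 : Real.sqrt (2 * ((2*n : ℕ):ℝ)) = 2 * Real.sqrt (n:ℝ) := by
    rw [hcast, show 2*(2*(n:ℝ)) = 4 * (n:ℝ) by ring, Real.sqrt_mul (by norm_num),
      show (4:ℝ) = 2^2 by norm_num, Real.sqrt_sq (by norm_num)]
  rw [Pseq, Real.Gamma_nat_eq_factorial, gammaHalf, Stirling.stirlingSeq,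
    Stirling.stirlingSeq, hs4, hcast, hF]
  have hsn' : Real.sqrt (n:ℝ) ≠ 0 := by positivity
  have hs2n' : Real.sqrt (2*(n:ℝ)) ≠ 0 := by positivity
  field_simp
  ring_nf
  rw [Real.sq_sqrt (by positivity : (0:ℝ) ≤ (n:ℝ)*2), Real.sq_sqrt hn0.le]

open Filter in
private lemma tendsto_two_mul : Tendsto (fun n : ℕ => 2*n) atTop atTop :=
  tendsto_atTop_mono (fun n => by simp only [id_eq]; omega) tendsto_id

open Filter in
private lemma tendsto_P : Tendsto Pseq atTop (nhds 1) := by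
  have hsq : Tendsto (fun n => Stirling.stirlingSeq n ^ 2) atTop (nhds (Real.sqrt π ^ 2)) :=
    Stirling.tendsto_stirlingSeq_sqrt_pi.pow 2
  have h2 : Tendsto (fun n => Stirling.stirlingSeq (2*n) * Real.sqrt π) atTop
      (nhds (Real.sqrt π * Real.sqrt π)) :=
    (Stirling.tendsto_stirlingSeq_sqrt_pi.comp tendsto_two_mul).mul_const _
  have hne : Real.sqrt π * Real.sqrt π ≠ 0 := by positivity
  have := hsq.div h2 hne
  rw [show Real.sqrt π ^ 2 / (Real.sqrt π * Real.sqrt π) = 1 by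
    rw [sq]; field_simp] at this
  exact this.congr' (by filter_upwards [eventually_ge_atTop 1] with n hn
    using (P_eq_stirling hn).symm)

private lemma even_eq {m : ℕ} (hm : 1 ≤ m) :
    Real.sqrt π * 2 ^ (2*m - 1) * Gamma (((2*m : ℕ) : ℝ)/2 + 1)^2 / Gamma (((2*m : ℕ) : ℝ) + 3/2)
    = (Real.sqrt π * Real.sqrt π / 2) * Pseq m * Pseq (2*m+1) *
      (Real.sqrt m * Real.sqrt (2*(m:ℝ)+1) / (2*(m:ℝ)+1)) := by
  have hx : (0:ℝ) < m := by exact_mod_cast hm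
  have hπ : (0:ℝ) < Real.sqrt π := Real.sqrt_pos.mpr pi_pos
  have hdup := Real.Gamma_mul_Gamma_add_half ((m:ℝ)+1/2)
  rw [show (m:ℝ)+1/2+1/2 = (m:ℝ)+1 by ring, show 2*((m:ℝ)+1/2) = 2*(m:ℝ)+1 by ring,
    show 1-(2*(m:ℝ)+1) = -((2*m : ℕ):ℝ) by push_cast; ring,
    Real.rpow_neg (by norm_num : (0:ℝ) ≤ 2), Real.rpow_natCast] at hdup
  have hc : Gamma (2*(m:ℝ)+1) = Gamma ((m:ℝ)+1/2) * Gamma ((m:ℝ)+1) * 2^(2*m) / Real.sqrt π := by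
    rw [eq_div_iff hπ.ne', hdup]
    field_simp
  have hG2 : Gamma (2*(m:ℝ)+2) = (2*(m:ℝ)+1) * Gamma (2*(m:ℝ)+1) := by
    rw [show 2*(m:ℝ)+2 = (2*(m:ℝ)+1)+1 by ring, Real.Gamma_add_one (by positivity)]
  have hp : (2:ℝ)^(2*m-1) = 2^(2*m)/2 := by
    rw [eq_div_iff (by norm_num : (2:ℝ) ≠ 0), ← pow_succ]; congr 1; omega
  have hb : Gamma ((m:ℝ)+1/2) ≠ 0 := (Real.Gamma_pos_of_pos (by positivity)).ne'
  have hd : Gamma (2*(m:ℝ)+3/2) ≠ 0 := (Real.Gamma_pos_of_pos (by positivity)).ne'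
  have hsm : Real.sqrt (m:ℝ) ≠ 0 := by positivity
  have hs2m : Real.sqrt (2*(m:ℝ)+1) ≠ 0 := by positivity
  rw [Pseq, Pseq]
  push_cast
  rw [show ((2:ℝ)*m)/2 + 1 = (m:ℝ)+1 by ring, show 2*(m:ℝ)+1+1 = 2*(m:ℝ)+2 by ring,
    show 2*(m:ℝ)+1+1/2 = 2*(m:ℝ)+3/2 by ring, hG2, hc, hp]
  generalize Real.sqrt π = s at *
  generalize Gamma ((m:ℝ)+1) = a at *
  generalize Gamma ((m:ℝ)+1/2) = b at *
  generalize Gamma (2*(m:ℝ)+3/2) = d at *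
  generalize Real.sqrt (m:ℝ) = u at *
  generalize Real.sqrt (2*(m:ℝ)+1) = v at *
  generalize (2:ℝ)^(2*m) = t at *
  have h2m1 : (2*(m:ℝ)+1) ≠ 0 := by positivity
  field_simp

private lemma odd_eq (m : ℕ) :
    Real.sqrt π * 2 ^ (2*m) * Gamma (((2*m+1 : ℕ) : ℝ)/2 + 1)^2 / Gamma (((2*m+1 : ℕ) : ℝ) + 3/2)
    = (Real.sqrt π * Real.sqrt π / 4) * Pseq (2*m+2) *
      (Gamma ((m:ℝ)+3/2) * Real.sqrt (2*(m:ℝ)+2) / Gamma ((m:ℝ)+2)) := by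
  have hπ : (0:ℝ) < Real.sqrt π := Real.sqrt_pos.mpr pi_pos
  have hdup := Real.Gamma_mul_Gamma_add_half ((m:ℝ)+3/2)
  rw [show (m:ℝ)+3/2+1/2 = (m:ℝ)+2 by ring, show 2*((m:ℝ)+3/2) = 2*(m:ℝ)+3 by ring,
    show 1-(2*(m:ℝ)+3) = -((2*m+2 : ℕ):ℝ) by push_cast; ring,
    Real.rpow_neg (by norm_num : (0:ℝ) ≤ 2), Real.rpow_natCast] at hdup
  have hc : Gamma (2*(m:ℝ)+3) = Gamma ((m:ℝ)+3/2) * Gamma ((m:ℝ)+2) * (2^(2*m)*4) / Real.sqrt π := by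
    rw [eq_div_iff hπ.ne', hdup, show 2*m+2 = (2*m)+2 by ring, pow_add]
    ring_nf
    rw [mul_assoc, ← mul_pow]
    norm_num
  have hb : Gamma ((m:ℝ)+2) ≠ 0 := (Real.Gamma_pos_of_pos (by positivity)).ne'
  have hd : Gamma (2*(m:ℝ)+5/2) ≠ 0 := (Real.Gamma_pos_of_pos (by positivity)).ne'
  have hw : Real.sqrt (2*(m:ℝ)+2) ≠ 0 := by positivity
  rw [Pseq]
  push_cast
  rw [show ((2:ℝ)*m+1)/2 + 1 = (m:ℝ)+3/2 by ring, show 2*(m:ℝ)+1+3/2 = 2*(m:ℝ)+5/2 by ring,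
    show 2*(m:ℝ)+2+1 = 2*(m:ℝ)+3 by ring, show 2*(m:ℝ)+2+1/2 = 2*(m:ℝ)+5/2 by ring, hc]
  generalize Real.sqrt π = s at *
  generalize Gamma ((m:ℝ)+3/2) = g at *
  generalize Gamma ((m:ℝ)+2) = h at *
  generalize Gamma (2*(m:ℝ)+5/2) = d at *
  generalize Real.sqrt (2*(m:ℝ)+2) = w at *
  generalize (2:ℝ)^(2*m) = t at *
  field_simp

open Filter in
private lemma tendsto_ratio : Tendsto (fun m : ℕ =>
    Real.sqrt m * Real.sqrt (2*(m:ℝ)+1) / (2*(m:ℝ)+1)) atTop (nhds (Real.sqrt (1/2))) := by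
  have key : ∀ m : ℕ, Real.sqrt m * Real.sqrt (2*(m:ℝ)+1) / (2*(m:ℝ)+1)
      = Real.sqrt ((m:ℝ) / (2*(m:ℝ)+1)) := by
    intro m
    have h1 : (0:ℝ) < 2*(m:ℝ)+1 := by positivity
    rw [Real.sqrt_div (by positivity : (0:ℝ) ≤ (m:ℝ))]
    rw [div_eq_div_iff h1.ne' (by positivity : Real.sqrt (2*(m:ℝ)+1) ≠ 0),
      mul_assoc, Real.mul_self_sqrt h1.le]
  have hlim : Tendsto (fun m : ℕ => (m:ℝ) / (2*(m:ℝ)+1)) atTop (nhds (1/2)) := by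
    have h0 : Tendsto (fun m : ℕ => 1/(m:ℝ)) atTop (nhds 0) :=
      tendsto_one_div_atTop_nhds_zero_nat
    have h2 : Tendsto (fun m : ℕ => 2 + 1/(m:ℝ)) atTop (nhds 2) := by
      simpa using (tendsto_const_nhds (x := (2:ℝ)) (f := atTop (α := ℕ))).add h0
    have h3 := (tendsto_const_nhds (x := (1:ℝ)) (f := atTop (α := ℕ))).div h2 (by norm_num)
    refine h3.congr' ?_
    filter_upwards [eventually_ge_atTop 1] with m hm
    have hm0 : ((m:ℝ)) ≠ 0 := by positivity
    rw [Pi.div_apply]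
    field_simp
  simpa only [key] using hlim.sqrt

open Filter in
private lemma tendsto_even_part : Tendsto (fun m : ℕ =>
    Real.sqrt π * 2 ^ (2*m - 1) * Gamma (((2*m : ℕ) : ℝ)/2 + 1)^2 / Gamma (((2*m : ℕ) : ℝ) + 3/2))
    atTop (nhds (π / (2 * Real.sqrt 2))) := by
  have hP1 : Tendsto (fun m : ℕ => Pseq m) atTop (nhds 1) := tendsto_P
  have hP2 : Tendsto (fun m : ℕ => Pseq (2*m+1)) atTop (nhds 1) :=
    tendsto_P.comp (tendsto_atTop_mono (fun n => by simp only [id_eq]; omega) tendsto_id)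
  have hcomb := (((tendsto_const_nhds
      (x := (Real.sqrt π * Real.sqrt π / 2 : ℝ)) (f := atTop (α := ℕ))).mul hP1).mul hP2).mul
      tendsto_ratio
  have hval : Real.sqrt π * Real.sqrt π / 2 * 1 * 1 * Real.sqrt (1/2) = π / (2 * Real.sqrt 2) := by
    rw [Real.mul_self_sqrt pi_pos.le, show (1/2 : ℝ) = 2⁻¹ by norm_num, Real.sqrt_inv]
    have h2 : Real.sqrt 2 ≠ 0 := by positivity
    field_simp
  rw [hval] at hcomb
  refine hcomb.congr' ?_
  filter_upwards [eventually_ge_atTop 1] with m hm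
  exact (even_eq hm).symm

open Filter in
private lemma tendsto_odd_part : Tendsto (fun m : ℕ =>
    Real.sqrt π * 2 ^ (2*m) * Gamma (((2*m+1 : ℕ) : ℝ)/2 + 1)^2
      / Gamma (((2*m+1 : ℕ) : ℝ) + 3/2))
    atTop (nhds (π / (2 * Real.sqrt 2))) := by
  have hfac : ∀ m : ℕ, Gamma ((m:ℝ)+3/2) * Real.sqrt (2*(m:ℝ)+2) / Gamma ((m:ℝ)+2)
      = Real.sqrt 2 / Pseq (m+1) := by
    intro m
    rw [Pseq]
    push_cast
    rw [show (m:ℝ)+1+1 = (m:ℝ)+2 by ring, show (m:ℝ)+1+1/2 = (m:ℝ)+3/2 by ring,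
      show 2*(m:ℝ)+2 = 2*((m:ℝ)+1) by ring, Real.sqrt_mul (by norm_num : (0:ℝ) ≤ 2)]
    have hb : Gamma ((m:ℝ)+2) ≠ 0 := (Real.Gamma_pos_of_pos (by positivity)).ne'
    have hg : Gamma ((m:ℝ)+3/2) ≠ 0 := (Real.Gamma_pos_of_pos (by positivity)).ne'
    have hs : Real.sqrt ((m:ℝ)+1) ≠ 0 := by positivity
    field_simp
  have hP2 : Tendsto (fun m : ℕ => Pseq (2*m+2)) atTop (nhds 1) :=
    tendsto_P.comp (tendsto_atTop_mono (fun n => by simp only [id_eq]; omega) tendsto_id)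
  have hP1 : Tendsto (fun m : ℕ => Pseq (m+1)) atTop (nhds 1) :=
    tendsto_P.comp (tendsto_atTop_mono (fun n => by simp only [id_eq]; omega) tendsto_id)
  have hdiv : Tendsto (fun m : ℕ => Real.sqrt 2 / Pseq (m+1)) atTop (nhds (Real.sqrt 2)) := by
    have := (tendsto_const_nhds (x := (Real.sqrt 2 : ℝ)) (f := atTop (α := ℕ))).div hP1
      one_ne_zero
    simpa [Pi.div_def] using this
  have hcomb := ((tendsto_const_nhds
      (x := (Real.sqrt π * Real.sqrt π / 4 : ℝ)) (f := atTop (α := ℕ))).mul hP2).mul hdiv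
  have hval : Real.sqrt π * Real.sqrt π / 4 * 1 * Real.sqrt 2 = π / (2 * Real.sqrt 2) := by
    rw [Real.mul_self_sqrt pi_pos.le]
    have h2 : Real.sqrt 2 ≠ 0 := by positivity
    have h22 : Real.sqrt 2 * Real.sqrt 2 = 2 := Real.mul_self_sqrt (by norm_num)
    have h22' : Real.sqrt 2 ^ 2 = 2 := Real.sq_sqrt (by norm_num)
    field_simp
    linear_combination 2 * h22'
  rw [hval] at hcomb
  refine hcomb.congr' ?_
  filter_upwards with m
  rw [← hfac m]
  exact (odd_eq m).symm

theorem Mk_tendsto_limit :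
    Filter.Tendsto
      (fun k : ℕ =>
        Real.sqrt π * 2 ^ (k - 1) * Gamma ((k : ℝ) / 2 + 1) ^ 2 / Gamma ((k : ℝ) + 3 / 2))
      Filter.atTop (nhds (π / (2 * Real.sqrt 2))) := by
  apply tendsto_even_odd'
  · exact tendsto_even_part
  · have : ∀ m : ℕ, 2*m+1-1 = 2*m := fun m => by omega
    simpa only [this] using tendsto_odd_part
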